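/- Let n ≥ 1, let 0 ≤ r ≤ n, and let x_1, …, x_n be pairwise distinct complex numbers. Let Σ be the n×n matrix with (l,j)-entry σ_{l,n−j} (1 ≤ l, j ≤ n), let X = diag(x_1,…,x_n) and T = diag(τ_1^{−1},…,τ_n^{−1}), and let σ_d denote the elementary symmetric polynomial of degree d in all of x_1, …, x_n, with the convention σ_d = 0 for d < 0 or d > n. Then for all 1 ≤ k, j ≤ n, the (k,j)-entry of the matrix Σᵀ · X^r · T · Σ equals (−1)^{n−r}·σ_{n+r−k−j+1} if k ≤ r and j ≤ r, equals (−1)^{n−r+1}·σ_{n+r−k−j+1} if k ≥ r+1 and j ≥ r+1, and equals 0 otherwise. -/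

import Mathlib

open Finset Polynomial


lemma neg_one_zpow_congr (s t : ℤ) (h : 2 ∣ (s - t)) : ((-1:ℂ) ^ s) = (-1) ^ t := by
  obtain ⟨c, hc⟩ := h
  have hs : s = t + 2 * c := by omega
  subst hs
  rw [zpow_add₀ (by norm_num : (-1:ℂ) ≠ 0), zpow_mul]
  norm_num

lemma core_telescope (c : ℤ → ℂ) (N : ℕ) (u v : ℂ) :
    (u - v) * ∑ k ∈ range N, ∑ j ∈ range N, c (k + j) * u ^ k * v ^ j
      = (∑ j ∈ range N, (c (N + j - 1) * u ^ N - c ((j:ℤ) - 1)) * v ^ j)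
        + ∑ k ∈ range N, (c ((k:ℤ) - 1) - c (k + N - 1) * v ^ N) * u ^ k := by
  set T : ℕ → ℕ → ℂ := fun k j => c ((k:ℤ) + (j:ℤ) - 1) * u ^ k * v ^ j with hT
  have hA : ∀ j : ℕ, ∑ k ∈ range N, c ((k:ℤ) + j) * u ^ (k+1) * v ^ j
      = (∑ k ∈ range N, T k j) + T N j - T 0 j := by
    intro j
    have h1 : ∀ k : ℕ, c ((k:ℤ) + j) * u ^ (k+1) * v ^ j = T (k+1) j := by
      intro k; simp only [hT]; push_cast; ring_nf
    simp_rw [h1]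
    have h3 := Finset.sum_range_succ' (fun k => T k j) N
    have h2 := Finset.sum_range_succ (fun k => T k j) N
    linear_combination h2 - h3
  have hB : ∀ k : ℕ, ∑ j ∈ range N, c ((k:ℤ) + j) * u ^ k * v ^ (j+1)
      = (∑ j ∈ range N, T k j) + T k N - T k 0 := by
    intro k
    have h1 : ∀ j : ℕ, c ((k:ℤ) + j) * u ^ k * v ^ (j+1) = T k (j+1) := by
      intro j; simp only [hT]; push_cast; ring_nf
    simp_rw [h1]
    have h3 := Finset.sum_range_succ' (fun j => T k j) N
    have h2 := Finset.sum_range_succ (fun j => T k j) N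
    linear_combination h2 - h3
  have expand : (u - v) * ∑ k ∈ range N, ∑ j ∈ range N, c ((k:ℤ) + j) * u ^ k * v ^ j
      = (∑ j ∈ range N, ∑ k ∈ range N, c ((k:ℤ) + j) * u ^ (k+1) * v ^ j)
        - ∑ k ∈ range N, ∑ j ∈ range N, c ((k:ℤ) + j) * u ^ k * v ^ (j+1) := by
    have e1 : (u - v) * ∑ k ∈ range N, ∑ j ∈ range N, c ((k:ℤ) + j) * u ^ k * v ^ j
        = ∑ k ∈ range N, ∑ j ∈ range N,
            (c ((k:ℤ) + j) * u ^ (k+1) * v ^ j - c ((k:ℤ) + j) * u ^ k * v ^ (j+1)) := by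
      rw [Finset.mul_sum]
      refine Finset.sum_congr rfl fun k _ => ?_
      rw [Finset.mul_sum]
      refine Finset.sum_congr rfl fun j _ => ?_
      ring
    rw [e1]
    simp only [Finset.sum_sub_distrib]
    congr 1
    exact Finset.sum_comm
  rw [expand]
  simp_rw [hA, hB]
  have hcomm : ∑ j ∈ range N, ∑ k ∈ range N, T k j = ∑ k ∈ range N, ∑ j ∈ range N, T k j :=
    Finset.sum_comm
  have hR1 : ∀ j : ℕ, T N j - T 0 j = (c ((N:ℤ) + j - 1) * u ^ N - c ((j:ℤ) - 1)) * v ^ j := by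
    intro j
    simp only [hT, Nat.cast_zero, zero_add, pow_zero, mul_one, one_mul]
    ring
  have hR2 : ∀ k : ℕ, T k 0 - T k N = (c ((k:ℤ) - 1) - c ((k:ℤ) + N - 1) * v ^ N) * u ^ k := by
    intro k
    simp only [hT, Nat.cast_zero, add_zero, pow_zero, mul_one, one_mul]
    ring
  simp only [Finset.sum_add_distrib, Finset.sum_sub_distrib]
  rw [← Finset.sum_congr rfl (fun j _ => (hR1 j)), ← Finset.sum_congr rfl (fun k _ => (hR2 k))]
  simp only [Finset.sum_sub_distrib]
  linear_combination hcomm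


noncomputable def qq (n : ℕ) (x : Fin n → ℂ) (m : ℤ) : ℂ :=
  if 0 ≤ m then (-1)^m.toNat *
    ∑ t ∈ Finset.powersetCard m.toNat (Finset.univ : Finset (Fin n)), ∏ i ∈ t, x i
  else 0

lemma qq_zero (n : ℕ) (x : Fin n → ℂ) : qq n x 0 = 1 := by
  simp [qq]

lemma qq_neg (n : ℕ) (x : Fin n → ℂ) (m : ℤ) (h : m < 0) : qq n x m = 0 := by
  simp [qq, not_le.mpr h]

lemma qq_gt (n : ℕ) (x : Fin n → ℂ) (m : ℤ) (h : (n:ℤ) < m) : qq n x m = 0 := by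
  have h0 : (0:ℤ) ≤ m := by omega
  have hcard : (Finset.univ : Finset (Fin n)).card < m.toNat := by
    simp only [Finset.card_univ, Fintype.card_fin]; omega
  rw [qq, if_pos h0, Finset.powersetCard_eq_empty.mpr hcard]
  simp

lemma Pf_eq (n : ℕ) (x : Fin n → ℂ) (w : ℂ) :
    ∑ i ∈ range (n+1), qq n x ((n:ℤ) - i) * w ^ i = ∏ i, (w - x i) := by
  have hnodal : (Lagrange.nodal Finset.univ x).eval w = ∏ i, (w - x i) := Lagrange.eval_nodal
  rw [← hnodal, Polynomial.eval_eq_sum_range]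
  have hdeg : (Lagrange.nodal (Finset.univ : Finset (Fin n)) x).natDegree = n := by
    rw [Lagrange.natDegree_nodal, Finset.card_univ, Fintype.card_fin]
  rw [hdeg]
  refine Finset.sum_congr rfl fun i hi => ?_
  rw [Finset.mem_range] at hi
  have hin : i ≤ n := by omega
  congr 1
  have hcoeff : (Lagrange.nodal (Finset.univ : Finset (Fin n)) x).coeff i
      = (-1)^(n - i) * ((Finset.univ.val.map x).esymm (n - i)) := by
    have hm : Lagrange.nodal (Finset.univ : Finset (Fin n)) x
        = ((Finset.univ.val.map x).map (fun t => X - C t)).prod := by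
      rw [Lagrange.nodal_eq, Multiset.map_map]
      rfl
    have hcard : Multiset.card (Finset.univ.val.map x) = n := by
      simp
    have := Multiset.prod_X_sub_C_coeff (Finset.univ.val.map x)
      (k := i) (by rw [hcard]; exact hin)
    rw [hm, this, hcard]
  rw [hcoeff, Finset.esymm_map_val]
  have ht : ((n:ℤ) - i).toNat = n - i := by omega
  rw [qq, if_pos (by omega : (0:ℤ) ≤ (n:ℤ) - i), ht]

noncomputable def SSf (n r : ℕ) (x : Fin n → ℂ) (u v : ℂ) : ℂ :=
  (∑ k ∈ Finset.Ico r n, ∑ j ∈ Finset.Ico r n, qq n x ((n:ℤ)+r-1-k-j) * u ^ k * v ^ j)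
  - ∑ k ∈ range r, ∑ j ∈ range r, qq n x ((n:ℤ)+r-1-k-j) * u ^ k * v ^ j


lemma SS_key (n r : ℕ) (hr : r ≤ n) (x : Fin n → ℂ) (u v : ℂ) :
    (u - v) * SSf n r x u v = v ^ r * (∏ i, (u - x i)) - u ^ r * ∏ i, (v - x i) := by
  set q : ℤ → ℂ := qq n x with hq
  set N := n - r with hN
  have hNr : (N:ℤ) = (n:ℤ) - r := by omega
  -- SB as range sum
  have hSBr : (∑ k ∈ Finset.Ico r n, ∑ j ∈ Finset.Ico r n, q ((n:ℤ)+r-1-k-j) * u ^ k * v ^ j)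
      = u^r * v^r * ∑ k ∈ range N, ∑ j ∈ range N, q ((N:ℤ)-1-((k:ℤ)+j)) * u ^ k * v ^ j := by
    rw [Finset.sum_Ico_eq_sum_range]
    rw [Finset.mul_sum]
    refine Finset.sum_congr rfl fun k _ => ?_
    rw [Finset.sum_Ico_eq_sum_range]
    rw [Finset.mul_sum]
    refine Finset.sum_congr rfl fun j _ => ?_
    have harg : (n:ℤ)+r-1-(↑(r+k))-(↑(r+j)) = (N:ℤ)-1-((k:ℤ)+j) := by push_cast; omega
    rw [harg, pow_add, pow_add]
    ring
  have hct : (u - v) * ∑ k ∈ range N, ∑ j ∈ range N, q ((N:ℤ)-1-((k:ℤ)+j)) * u ^ k * v ^ j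
      = (∑ j ∈ range N, (q ((N:ℤ)-1-((N:ℤ)+j-1)) * u ^ N - q ((N:ℤ)-1-((j:ℤ)-1))) * v ^ j)
        + ∑ k ∈ range N, (q ((N:ℤ)-1-((k:ℤ)-1)) - q ((N:ℤ)-1-((k:ℤ)+N-1)) * v ^ N) * u ^ k :=
    core_telescope (fun m => q ((N:ℤ)-1-m)) N u v
  have hIf1 : (∑ j ∈ range N, (q ((N:ℤ)-1-((N:ℤ)+j-1)) * u ^ N - q ((N:ℤ)-1-((j:ℤ)-1))) * v ^ j)
      = (if 0 ∈ range N then u^N * v^(0:ℕ) else 0) - ∑ j ∈ range N, q ((N:ℤ)-j) * v ^ j := by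
    have h1 : ∀ j ∈ range N, (q ((N:ℤ)-1-((N:ℤ)+j-1)) * u ^ N - q ((N:ℤ)-1-((j:ℤ)-1))) * v ^ j
        = (if j = 0 then u^N * v^j else 0) - q ((N:ℤ)-j) * v ^ j := by
      intro j _
      have e1 : (N:ℤ)-1-((N:ℤ)+j-1) = -(j:ℤ) := by ring
      have e2 : (N:ℤ)-1-((j:ℤ)-1) = (N:ℤ)-j := by ring
      rw [e1, e2]
      rcases Nat.eq_zero_or_pos j with h | h
      · subst h
        simp only [if_pos rfl, hq, qq_zero, Nat.cast_zero, neg_zero, sub_zero, eq_self_iff_true, if_true]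
        ring
      · have hz : q (-(j:ℤ)) = 0 := by rw [hq]; exact qq_neg n x _ (by omega)
        rw [if_neg (by omega), hz]
        ring
    rw [Finset.sum_congr rfl h1, Finset.sum_sub_distrib, Finset.sum_ite_eq' (range N) 0 (fun j => u^N * v^j)]
  have hIf2 : (∑ k ∈ range N, (q ((N:ℤ)-1-((k:ℤ)-1)) - q ((N:ℤ)-1-((k:ℤ)+N-1)) * v ^ N) * u ^ k)
      = ∑ k ∈ range N, q ((N:ℤ)-k) * u ^ k - (if 0 ∈ range N then v^N * u^(0:ℕ) else 0) := by
    have h1 : ∀ k ∈ range N, (q ((N:ℤ)-1-((k:ℤ)-1)) - q ((N:ℤ)-1-((k:ℤ)+N-1)) * v ^ N) * u ^ k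
        = q ((N:ℤ)-k) * u ^ k - (if k = 0 then v^N * u^k else 0) := by
      intro k _
      have e1 : (N:ℤ)-1-((k:ℤ)-1) = (N:ℤ)-k := by ring
      have e2 : (N:ℤ)-1-((k:ℤ)+N-1) = -(k:ℤ) := by ring
      rw [e1, e2]
      rcases Nat.eq_zero_or_pos k with h | h
      · subst h
        simp only [if_pos rfl, hq, qq_zero, Nat.cast_zero, neg_zero, sub_zero, eq_self_iff_true, if_true]
        ring
      · have hz : q (-(k:ℤ)) = 0 := by rw [hq]; exact qq_neg n x _ (by omega)
        rw [if_neg (by omega), hz]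
        ring
    rw [Finset.sum_congr rfl h1, Finset.sum_sub_distrib, Finset.sum_ite_eq' (range N) 0 (fun k => v^N * u^k)]
  -- SA boundary
  have hctA : (u - v) * ∑ k ∈ range r, ∑ j ∈ range r, q ((n:ℤ)+r-1-((k:ℤ)+j)) * u ^ k * v ^ j
      = (∑ j ∈ range r, (q ((n:ℤ)+r-1-((r:ℤ)+j-1)) * u ^ r - q ((n:ℤ)+r-1-((j:ℤ)-1))) * v ^ j)
        + ∑ k ∈ range r, (q ((n:ℤ)+r-1-((k:ℤ)-1)) - q ((n:ℤ)+r-1-((k:ℤ)+r-1)) * v ^ r) * u ^ k :=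
    core_telescope (fun m => q ((n:ℤ)+r-1-m)) r u v
  have hSAarg : (∑ k ∈ range r, ∑ j ∈ range r, q ((n:ℤ)+r-1-k-j) * u ^ k * v ^ j)
      = ∑ k ∈ range r, ∑ j ∈ range r, q ((n:ℤ)+r-1-((k:ℤ)+j)) * u ^ k * v ^ j := by
    refine Finset.sum_congr rfl fun k _ => Finset.sum_congr rfl fun j _ => ?_
    congr 2
    ring
  have hA1 : (∑ j ∈ range r, (q ((n:ℤ)+r-1-((r:ℤ)+j-1)) * u ^ r - q ((n:ℤ)+r-1-((j:ℤ)-1))) * v ^ j)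
      = u ^ r * ∑ j ∈ range r, q ((n:ℤ)-j) * v ^ j := by
    rw [Finset.mul_sum]
    refine Finset.sum_congr rfl fun j hj => ?_
    rw [Finset.mem_range] at hj
    have e1 : (n:ℤ)+r-1-((r:ℤ)+j-1) = (n:ℤ)-j := by ring
    have e2 : (n:ℤ)+r-1-((j:ℤ)-1) = (n:ℤ)+r-j := by ring
    have hz : q ((n:ℤ)+r-j) = 0 := by rw [hq]; exact qq_gt n x _ (by omega)
    rw [e1, e2, hz]
    ring
  have hA2 : (∑ k ∈ range r, (q ((n:ℤ)+r-1-((k:ℤ)-1)) - q ((n:ℤ)+r-1-((k:ℤ)+r-1)) * v ^ r) * u ^ k)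
      = -(v ^ r * ∑ k ∈ range r, q ((n:ℤ)-k) * u ^ k) := by
    rw [Finset.mul_sum, ← Finset.sum_neg_distrib]
    refine Finset.sum_congr rfl fun k hk => ?_
    rw [Finset.mem_range] at hk
    have e1 : (n:ℤ)+r-1-((k:ℤ)-1) = (n:ℤ)+r-k := by ring
    have e2 : (n:ℤ)+r-1-((k:ℤ)+r-1) = (n:ℤ)-k := by ring
    have hz : q ((n:ℤ)+r-k) = 0 := by rw [hq]; exact qq_gt n x _ (by omega)
    rw [e1, e2, hz]
    ring
  -- split of the full polynomial sum
  have hsplit : ∀ w : ℂ, ∑ i ∈ range (n+1), q ((n:ℤ)-i) * w ^ i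
      = w^n + ((∑ i ∈ range r, q ((n:ℤ)-i) * w ^ i) + w^r * ∑ i ∈ range N, q ((N:ℤ)-i) * w ^ i) := by
    intro w

    rw [Finset.sum_range_succ]
    have hnn : (n:ℤ) - n = 0 := by ring
    rw [hnn, hq, qq_zero, one_mul]
    have hsplit2 : ∑ i ∈ range n, q ((n:ℤ)-i) * w ^ i
        = (∑ i ∈ range r, q ((n:ℤ)-i) * w ^ i) + ∑ i ∈ range N, q ((n:ℤ)-(↑(r+i))) * w ^ (r+i) := by
      have hcons := Finset.sum_Ico_consecutive (f := fun i => q ((n:ℤ)-i) * w ^ i)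
        (Nat.zero_le r) hr
      have h4 := Finset.sum_Ico_eq_sum_range (f := fun i => q ((n:ℤ)-i) * w ^ i) (m := r) (n := n)
      rw [Finset.range_eq_Ico, ← hcons, h4]
      congr 1
      rw [Finset.range_eq_Ico]
    rw [hsplit2]
    have h3 : ∑ i ∈ range N, q ((n:ℤ)-(↑(r+i))) * w ^ (r+i)
        = w^r * ∑ i ∈ range N, q ((N:ℤ)-i) * w ^ i := by
      rw [Finset.mul_sum]
      refine Finset.sum_congr rfl fun i _ => ?_
      have e1 : (n:ℤ)-(↑(r+i)) = (N:ℤ)-i := by push_cast; omega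
      rw [e1, pow_add]
      ring
    rw [h3]
    ring
  -- final assembly
  have hIfFin : u^r * v^r * ((if 0 ∈ range N then u^N * v^(0:ℕ) else 0)
      - (if 0 ∈ range N then v^N * u^(0:ℕ) else 0)) = u^n * v^r - u^r * v^n := by
    rcases Nat.eq_zero_or_pos N with h | h
    · have hrn : r = n := by omega
      have hmem : 0 ∉ range N := by rw [Finset.mem_range]; omega
      rw [if_neg hmem, if_neg hmem]
      subst hrn
      ring
    · rw [if_pos (Finset.mem_range.mpr h), if_pos (Finset.mem_range.mpr h)]
      have e1 : u^r * u^N = u^n := by rw [← pow_add]; congr 1; omega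
      have e2 : v^r * v^N = v^n := by rw [← pow_add]; congr 1; omega
      rw [pow_zero, pow_zero]
      linear_combination v^r * e1 - u^r * e2
  rw [SSf, mul_sub, hSBr, ← mul_assoc, mul_comm (u-v) (u^r*v^r), mul_assoc, hct, hIf1, hIf2,
    hSAarg, hctA, hA1, hA2, ← Pf_eq n x u, ← Pf_eq n x v, ← hq, hsplit u, hsplit v]
  linear_combination hIfFin

lemma SS_val (n r : ℕ) (hr : r ≤ n) (x : Fin n → ℂ) (l : Fin n) (v : ℂ) :
    SSf n r x (x l) v = (x l) ^ r * ∏ i ∈ Finset.univ.erase l, (v - x i) := by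
  set u := x l with hu
  set QL := Lagrange.nodal (Finset.univ.erase l) x with hQL
  have hPu : (∏ i, (u - x i)) = 0 :=
    Finset.prod_eq_zero (Finset.mem_univ l) (by rw [hu, sub_self])
  have hprod : ∀ w : ℂ, (∏ i, (w - x i)) = (w - u) * QL.eval w := by
    intro w
    have h1 : Lagrange.nodal (Finset.univ : Finset (Fin n)) x = (X - C u) * QL :=
      Lagrange.nodal_eq_mul_nodal_erase (Finset.mem_univ l)
    have h2 := Lagrange.eval_nodal (s := (Finset.univ : Finset (Fin n))) (v := x) (x := w)
    rw [← h2, h1]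
    simp
  set SP : Polynomial ℂ :=
    (∑ k ∈ Finset.Ico r n, ∑ j ∈ Finset.Ico r n, C (qq n x ((n:ℤ)+r-1-k-j) * u ^ k) * X ^ j)
    - ∑ k ∈ range r, ∑ j ∈ range r, C (qq n x ((n:ℤ)+r-1-k-j) * u ^ k) * X ^ j with hSP
  have heval : ∀ w : ℂ, SP.eval w = SSf n r x u w := by
    intro w
    rw [hSP, SSf]
    simp only [eval_sub, eval_finset_sum, eval_mul, eval_C, eval_pow, eval_X]
  have hpoly : (X - C u) * SP = (X - C u) * (C (u ^ r) * QL) := by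
    apply Polynomial.funext
    intro w
    simp only [eval_mul, eval_sub, eval_X, eval_C]
    rw [heval w]
    have hk := SS_key n r hr x u w
    rw [hPu, hprod w] at hk
    -- hk : (u - w) * SSf n r x u w = w ^ r * 0 - u ^ r * ((w - u) * QL.eval w)
    linear_combination -hk
  have hSPeq : SP = C (u ^ r) * QL := mul_left_cancel₀ (X_sub_C_ne_zero u) hpoly
  have := heval v
  rw [hSPeq] at this
  rw [← this]
  simp only [eval_mul, eval_C]
  rw [hQL, Lagrange.eval_nodal]


lemma WV_one (n : ℕ) (x : Fin n → ℂ) (hx : Function.Injective x) :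
    (Matrix.of fun (j l : Fin n) => (Lagrange.basis Finset.univ x l).coeff j)
      * (Matrix.of fun (l m : Fin n) => x l ^ (m:ℕ)) = 1 := by
  ext j m
  rw [Matrix.mul_apply, Matrix.one_apply]
  have hdeg : ((X:ℂ[X]) ^ (m:ℕ)).degree < (Finset.univ : Finset (Fin n)).card := by
    rw [Polynomial.degree_X_pow, Finset.card_univ, Fintype.card_fin]
    exact_mod_cast m.isLt
  have hinterp := Lagrange.eq_interpolate (v := x) hx.injOn hdeg
  have hcoeff := congrArg (fun p => Polynomial.coeff p j) hinterp
  simp only [Lagrange.interpolate_apply, Polynomial.finset_sum_coeff, Polynomial.coeff_C_mul,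
    Polynomial.eval_pow, Polynomial.eval_X, Polynomial.coeff_X_pow] at hcoeff
  simp only [Matrix.of_apply]
  have hif : (if j = m then (1:ℂ) else 0) = (if (j:ℕ) = (m:ℕ) then (1:ℂ) else 0) := by
    simp [Fin.ext_iff]
  rw [hif, hcoeff]
  exact Finset.sum_congr rfl fun l _ => mul_comm _ _

open Finset in
lemma S_coeff (n : ℕ) (x : Fin n → ℂ)
    (l j : Fin n) (hτ : (∏ i ∈ Finset.univ.erase l, (x l - x i)) ≠ 0) :
    (∑ t ∈ Finset.powersetCard (n - 1 - (j : ℕ)) (Finset.univ.erase l), ∏ i ∈ t, x i)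
      = (-1:ℂ)^(n - 1 - (j:ℕ)) * (∏ i ∈ Finset.univ.erase l, (x l - x i))
        * (Lagrange.basis Finset.univ x l).coeff j := by
  have hbasis : Lagrange.basis Finset.univ x l
      = C (∏ i ∈ Finset.univ.erase l, (x l - x i))⁻¹ * Lagrange.nodal (Finset.univ.erase l) x := by
    rw [Lagrange.basis, Lagrange.nodal]
    simp only [Lagrange.basisDivisor]
    rw [Finset.prod_mul_distrib, ← map_prod, Finset.prod_inv_distrib]
  have hcard : (Finset.univ.erase l).card = n - 1 := by
    rw [Finset.card_erase_of_mem (Finset.mem_univ l), Finset.card_univ, Fintype.card_fin]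
  have hnodalcoeff : (Lagrange.nodal (Finset.univ.erase l) x).coeff j
      = (-1:ℂ)^(n - 1 - (j:ℕ)) *
        ∑ t ∈ Finset.powersetCard (n - 1 - (j : ℕ)) (Finset.univ.erase l), ∏ i ∈ t, x i := by
    have hm : Lagrange.nodal (Finset.univ.erase l) x
        = (((Finset.univ.erase l).val.map x).map (fun t => X - C t)).prod := by
      rw [Lagrange.nodal_eq, Multiset.map_map]
      rfl
    have hc2 : Multiset.card ((Finset.univ.erase l).val.map x) = n - 1 := by
      rw [Multiset.card_map]
      exact hcard
    have hjn : (j:ℕ) ≤ n - 1 := by omega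
    have := Multiset.prod_X_sub_C_coeff ((Finset.univ.erase l).val.map x)
      (k := (j:ℕ)) (by rw [hc2]; exact hjn)
    rw [hm, this, hc2, Finset.esymm_map_val]
  rw [hbasis, Polynomial.coeff_C_mul, hnodalcoeff]
  field_simp
  have hsq : ((-1:ℂ) ^ (n - 1 - (j:ℕ))) * ((-1:ℂ) ^ (n - 1 - (j:ℕ))) = 1 := by
    rw [← mul_pow]
    norm_num
  linear_combination -(∑ t ∈ powersetCard (n - 1 - (j:ℕ)) (univ.erase l), ∏ i ∈ t, x i)
    * hsq

theorem stmt_13 (n : ℕ) (hn : 1 ≤ n) (r : ℕ) (hr : r ≤ n)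
    (x : Fin n → ℂ) (hx : Function.Injective x)
    (S : Matrix (Fin n) (Fin n) ℂ)
    (hS : ∀ l j, S l j =
      ∑ t ∈ Finset.powersetCard (n - 1 - (j : ℕ)) (Finset.univ.erase l), ∏ i ∈ t, x i)
    (sAll : ℤ → ℂ)
    (hsAll : ∀ d : ℤ, sAll d = if 0 ≤ d then
      ∑ t ∈ Finset.powersetCard d.toNat (Finset.univ : Finset (Fin n)), ∏ i ∈ t, x i
      else 0) :
    ∀ k j : Fin n,
      (S.transpose * (Matrix.diagonal x) ^ r *
          Matrix.diagonal (fun l => (∏ i ∈ Finset.univ.erase l, (x l - x i))⁻¹) * S) k j =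
        if (k : ℕ) < r ∧ (j : ℕ) < r then
          (-1) ^ (n - r) * sAll ((n : ℤ) + (r : ℤ) - ((k : ℕ) : ℤ) - ((j : ℕ) : ℤ) - 1)
        else if r ≤ (k : ℕ) ∧ r ≤ (j : ℕ) then
          (-1) ^ (n - r + 1) * sAll ((n : ℤ) + (r : ℤ) - ((k : ℕ) : ℤ) - ((j : ℕ) : ℤ) - 1)
        else 0 := by
  intro k j
  set τ : Fin n → ℂ := fun l => ∏ i ∈ Finset.univ.erase l, (x l - x i) with hτdef
  have hτ : ∀ l, τ l ≠ 0 := by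
    intro l
    rw [hτdef]
    refine Finset.prod_ne_zero_iff.mpr fun i hi => ?_
    have hne : i ≠ l := (Finset.mem_erase.mp hi).1
    exact sub_ne_zero_of_ne fun hxx => hne (hx hxx).symm
  set W : Matrix (Fin n) (Fin n) ℂ :=
    Matrix.of fun (j l : Fin n) => (Lagrange.basis Finset.univ x l).coeff j with hWdef
  set V : Matrix (Fin n) (Fin n) ℂ := Matrix.of fun (l m : Fin n) => x l ^ (m:ℕ) with hVdef
  have hWV : W * V = 1 := WV_one n x hx
  have hVtWt : V.transpose * W.transpose = 1 := by
    rw [← Matrix.transpose_mul, hWV, Matrix.transpose_one]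
  set d : Fin n → ℂ := fun k => (-1)^(n-1-(k:ℕ)) with hddef
  have hd2 : ∀ k : Fin n, d k * d k = 1 := by
    intro k
    show ((-1:ℂ))^(n-1-(k:ℕ)) * ((-1:ℂ))^(n-1-(k:ℕ)) = 1
    rw [← mul_pow]
    norm_num
  have hS' : ∀ l j, S l j = d j * τ l * W j l := by
    intro l j
    rw [hS l j, S_coeff n x l j (hτ l)]
    simp only [hWdef, Matrix.of_apply, hddef, hτdef]
  set M0 : Matrix (Fin n) (Fin n) ℂ := Matrix.diagonal (fun l => x l ^ r * τ l) with hM0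
  set g : ℕ → ℕ → ℂ := fun a b =>
    if a < r ∧ b < r then
      (-1) ^ (n - r) * sAll ((n : ℤ) + (r : ℤ) - (a : ℤ) - (b : ℤ) - 1)
    else if r ≤ a ∧ r ≤ b then
      (-1) ^ (n - r + 1) * sAll ((n : ℤ) + (r : ℤ) - (a : ℤ) - (b : ℤ) - 1)
    else 0 with hgdef
  set Cm : Matrix (Fin n) (Fin n) ℂ := Matrix.of fun (k j : Fin n) => g (k:ℕ) (j:ℕ) with hCmdef
  set Cm' : Matrix (Fin n) (Fin n) ℂ :=
    Matrix.of fun (k j : Fin n) => d k * Cm k j * d j with hCm'def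
  -- sAll vs qq
  have hsAll_qq : ∀ (m : ℤ) (t : ℕ), m.toNat = t → 0 ≤ m → sAll m = (-1:ℂ)^t * qq n x m := by
    intro m t ht hm
    rw [qq, if_pos hm, hsAll m, if_pos hm, ht, ← mul_assoc, ← mul_pow]
    norm_num
  have hsAll_neg : ∀ m : ℤ, m < 0 → sAll m = 0 := by
    intro m hm
    rw [hsAll m, if_neg (by omega)]
  -- the key matrix identity
  have hVCV : V * Cm' * V.transpose = M0 := by
    ext l m
    set u := x l with hu
    set v := x m with hv
    set G : ℕ → ℕ → ℂ :=
      fun a b => u ^ a * ((-1:ℂ)^(n-1-a) * g a b * (-1:ℂ)^(n-1-b)) * v ^ b with hGdef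
    have hentry : (V * Cm' * V.transpose) l m
        = ∑ a ∈ range n, ∑ b ∈ range n, G a b := by
      rw [Matrix.mul_apply]
      have h1 : ∀ j' : Fin n, (V * Cm') l j' * V.transpose j' m
          = ∑ k' : Fin n, G (k':ℕ) (j':ℕ) := by
        intro j'
        rw [Matrix.mul_apply, Finset.sum_mul]
        rfl
      simp_rw [h1]
      rw [Finset.sum_comm]
      rw [← Fin.sum_univ_eq_sum_range (fun a => ∑ b ∈ range n, G a b) n]
      refine Finset.sum_congr rfl fun k' _ => ?_
      rw [← Fin.sum_univ_eq_sum_range (fun b => G (k':ℕ) b) n]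
    -- block values
    have blockA : ∀ a b : ℕ, a < r → b < r →
        G a b = -(qq n x ((n:ℤ)+r-1-a-b) * u ^ a * v ^ b) := by
      intro a b ha hb
      have hm : (0:ℤ) ≤ (n : ℤ) + (r : ℤ) - (a : ℤ) - (b : ℤ) - 1 := by omega
      have hsv := hsAll_qq ((n : ℤ) + (r : ℤ) - (a : ℤ) - (b : ℤ) - 1) (n+r-1-a-b)
        (by omega) hm
      have hodd : Odd ((n-1-a)+((n-1-b)+((n-r)+(n+r-1-a-b)))) := by
        rw [Nat.odd_iff]; omega
      have hsign : (-1:ℂ)^(n-1-a) * ((-1:ℂ)^(n-1-b) * ((-1:ℂ)^(n-r) * (-1:ℂ)^(n+r-1-a-b)))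
          = -1 := by
        rw [← pow_add, ← pow_add, ← pow_add]
        exact Odd.neg_one_pow hodd
      rw [hGdef]
      simp only [hgdef]
      rw [if_pos ⟨ha, hb⟩, hsv]
      have harg : (n:ℤ)+r-1-a-b = (n : ℤ) + (r : ℤ) - (a : ℤ) - (b : ℤ) - 1 := by ring
      rw [harg]
      linear_combination u^a * v^b * qq n x ((n : ℤ) + (r : ℤ) - (a : ℤ) - (b : ℤ) - 1) * hsign
    have blockB : ∀ a b : ℕ, r ≤ a → a < n → r ≤ b → b < n →
        G a b = qq n x ((n:ℤ)+r-1-a-b) * u ^ a * v ^ b := by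
      intro a b har han hbr hbn
      have harg : (n:ℤ)+r-1-a-b = (n : ℤ) + (r : ℤ) - (a : ℤ) - (b : ℤ) - 1 := by ring
      rw [hGdef]
      simp only [hgdef]
      rw [if_neg (by omega), if_pos ⟨har, hbr⟩, harg]
      rcases lt_or_ge ((n : ℤ) + (r : ℤ) - (a : ℤ) - (b : ℤ) - 1) 0 with hm | hm
      · rw [hsAll_neg _ hm, qq_neg n x _ hm]
        ring
      · have hsv := hsAll_qq ((n : ℤ) + (r : ℤ) - (a : ℤ) - (b : ℤ) - 1) (n+r-1-a-b)
          (by omega) hm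
        have heven : Even ((n-1-a)+((n-1-b)+((n-r+1)+(n+r-1-a-b)))) := by
          rw [Nat.even_iff]; omega
        have hsign : (-1:ℂ)^(n-1-a) * ((-1:ℂ)^(n-1-b) * ((-1:ℂ)^(n-r+1) * (-1:ℂ)^(n+r-1-a-b)))
            = 1 := by
          rw [← pow_add, ← pow_add, ← pow_add]
          exact Even.neg_one_pow heven
        rw [hsv]
        linear_combination u^a * v^b * qq n x ((n : ℤ) + (r : ℤ) - (a : ℤ) - (b : ℤ) - 1) * hsign
    have blockC : ∀ a b : ℕ, a < r → r ≤ b → G a b = 0 := by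
      intro a b ha hb
      rw [hGdef]
      simp only [hgdef]
      rw [if_neg (by omega), if_neg (by omega)]
      ring
    have blockC' : ∀ a b : ℕ, r ≤ a → b < r → G a b = 0 := by
      intro a b ha hb
      rw [hGdef]
      simp only [hgdef]
      rw [if_neg (by omega), if_neg (by omega)]
      ring
    -- sum splitting
    have hsplitsum : ∀ h : ℕ → ℂ, ∑ a ∈ range n, h a
        = (∑ a ∈ range r, h a) + ∑ a ∈ Finset.Ico r n, h a := by
      intro h
      rw [Finset.range_eq_Ico, ← Finset.sum_Ico_consecutive h (Nat.zero_le r) hr,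
        ← Finset.range_eq_Ico]
    have hsum : ∑ a ∈ range n, ∑ b ∈ range n, G a b = SSf n r x u v := by
      rw [hsplitsum (fun a => ∑ b ∈ range n, G a b)]
      have e1 : ∑ a ∈ range r, ∑ b ∈ range n, G a b
          = -∑ a ∈ range r, ∑ b ∈ range r, qq n x ((n:ℤ)+r-1-a-b) * u ^ a * v ^ b := by
        rw [← Finset.sum_neg_distrib]
        refine Finset.sum_congr rfl fun a ha => ?_
        rw [Finset.mem_range] at ha
        rw [hsplitsum (fun b => G a b)]
        rw [Finset.sum_congr rfl (fun b hb => blockA a b ha (Finset.mem_range.mp hb)),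
          Finset.sum_congr rfl (fun b hb => blockC a b ha (Finset.mem_Ico.mp hb).1)]
        rw [Finset.sum_const_zero, add_zero, ← Finset.sum_neg_distrib]
      have e2 : ∑ a ∈ Finset.Ico r n, ∑ b ∈ range n, G a b
          = ∑ a ∈ Finset.Ico r n, ∑ b ∈ Finset.Ico r n, qq n x ((n:ℤ)+r-1-a-b) * u ^ a * v ^ b := by
        refine Finset.sum_congr rfl fun a ha => ?_
        rw [Finset.mem_Ico] at ha
        rw [hsplitsum (fun b => G a b)]
        rw [Finset.sum_congr rfl (fun b hb => blockC' a b ha.1 (Finset.mem_range.mp hb)),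
          Finset.sum_const_zero, zero_add]
        exact Finset.sum_congr rfl fun b hb =>
          blockB a b ha.1 ha.2 (Finset.mem_Ico.mp hb).1 (Finset.mem_Ico.mp hb).2
      rw [e1, e2, SSf]
      ring
    rw [hentry, hsum, SS_val n r hr x l v]
    rw [hM0]
    rcases eq_or_ne l m with hlm | hlm
    · subst hlm
      rw [Matrix.diagonal_apply_eq]
    · rw [Matrix.diagonal_apply_ne _ hlm]
      have hmem : m ∈ Finset.univ.erase l := Finset.mem_erase.mpr ⟨hlm.symm, Finset.mem_univ m⟩
      rw [Finset.prod_eq_zero hmem (by rw [hv, sub_self])]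
      ring
  -- matrix algebra
  have hCm'eq : Cm' = W * M0 * W.transpose := by
    calc Cm' = 1 * Cm' * 1 := by rw [Matrix.one_mul, Matrix.mul_one]
    _ = (W * V) * Cm' * (V.transpose * W.transpose) := by rw [hWV, hVtWt]
    _ = W * (V * Cm' * V.transpose) * W.transpose := by
        simp only [Matrix.mul_assoc]
    _ = W * M0 * W.transpose := by rw [hVCV]
  have hWMW : (W * M0 * W.transpose) k j = ∑ l, W k l * (x l ^ r * τ l) * W j l := by
    rw [Matrix.mul_apply]
    refine Finset.sum_congr rfl fun l _ => ?_
    rw [Matrix.mul_diagonal, Matrix.transpose_apply]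
  -- LHS entry
  have hL : (S.transpose * (Matrix.diagonal x) ^ r *
        Matrix.diagonal (fun l => (∏ i ∈ Finset.univ.erase l, (x l - x i))⁻¹) * S) k j
      = ∑ l, S l k * x l ^ r * (τ l)⁻¹ * S l j := by
    rw [Matrix.diagonal_pow, Matrix.mul_apply]
    refine Finset.sum_congr rfl fun l _ => ?_
    rw [Matrix.mul_diagonal, Matrix.mul_diagonal, Matrix.transpose_apply, Pi.pow_apply]
  have hfin : (S.transpose * (Matrix.diagonal x) ^ r *
        Matrix.diagonal (fun l => (∏ i ∈ Finset.univ.erase l, (x l - x i))⁻¹) * S) k j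
      = d k * d j * (W * M0 * W.transpose) k j := by
    rw [hL, hWMW, Finset.mul_sum]
    refine Finset.sum_congr rfl fun l _ => ?_
    rw [hS' l k, hS' l j]
    have h0 := hτ l
    field_simp
  rw [hfin, ← hCm'eq]
  have : Cm' k j = d k * Cm k j * d j := rfl
  rw [this]
  have hfin2 : d k * d j * (d k * Cm k j * d j) = Cm k j := by
    have h1 := hd2 k
    have h2 := hd2 j
    linear_combination Cm k j * d j * d j * h1 + Cm k j * h2
  rw [hfin2]
  rfl
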